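/- Let G = (V_1 ∪ … ∪ V_k, E) be a k-partite k-uniform hypergraph. If G is vertex-separable, then G is representable as an axis-parallel point line cover instance in ℝ^k: there is an injection from E to points of ℝ^k and an injection from V to axis-parallel lines (V_i to lines in direction i) such that v ∈ e if and only if the line of v contains the point of e. -/

import Mathlib

/-- A `k`-partite `k`-uniform hypergraph: vertices `V` with parts indexed by `Fin k`,
hyperedges indexed by `E`, each hyperedge selecting exactly one vertex per part. -/
structure KHypergraph (k : ℕ) (V E : Type) where
  part : V → Fin k
  vert : E → Fin k → V
  hpart : ∀ e i, part (vert e i) = i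

namespace KHypergraph

variable {k : ℕ} {V E : Type}

/-- Vertex `v` belongs to hyperedge `e`. -/
def Mem (G : KHypergraph k V E) (v : V) (e : E) : Prop :=
  G.vert e (G.part v) = v

/-- Two vertices are adjacent if they are both contained in a common hyperedge. -/
def Adj (G : KHypergraph k V E) (u v : V) : Prop :=
  ∃ e : E, G.Mem u e ∧ G.Mem v e

/-- `l` is an `s`–`t` path: a nonempty sequence of vertices starting at `s`, ending at `t`,
with consecutive vertices contained in a common hyperedge. -/
def IsPath (G : KHypergraph k V E) (s t : V) (l : List V) : Prop :=
  l.Chain' G.Adj ∧ l.head? = some s ∧ l.getLast? = some t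

/-- Vertex separability: every two distinct vertices of the same part `V_i` can be
separated by removing some part `V_j`, `j ≠ i`. -/
def VertexSeparable (G : KHypergraph k V E) : Prop :=
  ∀ v v' : V, v ≠ v' → G.part v = G.part v' →
    ∃ j : Fin k, j ≠ G.part v ∧
      ∀ l : List V, G.IsPath v v' l → ∃ w ∈ l, G.part w = j

/-- Edge separability: every two distinct hyperedges can be separated by removing
some part `V_j`. -/
def EdgeSeparable (G : KHypergraph k V E) : Prop :=
  ∀ e e' : E, G.vert e ≠ G.vert e' →
    ∃ j : Fin k, ∀ (v v' : V) (l : List V), G.Mem v e → G.Mem v' e' →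
      G.IsPath v v' l → ∃ w ∈ l, G.part w = j

/-- The axis-parallel line in `ℝ^k` representing a vertex `v` of part `i = G.part v`:
all coordinates `j ≠ i` are fixed to `L v j`, coordinate `i` is free. -/
def lineOf (G : KHypergraph k V E) (L : V → Fin k → ℝ) (v : V) : Set (Fin k → ℝ) :=
  {x | ∀ j : Fin k, j ≠ G.part v → x j = L v j}

/-- `(p, L)` is an axis-parallel point line cover representation of `G` in `ℝ^k`:
hyperedges map to pairwise distinct points, vertices map to pairwise distinct
axis-parallel lines (part `V_i` to direction `i`), and hypergraph incidence coincides
with geometric incidence. -/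
def Represents (G : KHypergraph k V E) (p : E → Fin k → ℝ) (L : V → Fin k → ℝ) : Prop :=
  Function.Injective p ∧
  (∀ v v' : V, v ≠ v' → G.lineOf L v ≠ G.lineOf L v') ∧
  (∀ (v : V) (e : E), G.Mem v e ↔ p e ∈ G.lineOf L v)

/-- The auxiliary graph `G_i` on the hyperedges: `e` and `e'` are adjacent iff they
share a vertex in a part `V_j` with `j ≠ i`. -/
def GiAdj (G : KHypergraph k V E) (i : Fin k) (e e' : E) : Prop :=
  ∃ v : V, G.Mem v e ∧ G.Mem v e' ∧ G.part v ≠ i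



variable {k : ℕ} {V E : Type}

lemma adj_symm' (G : KHypergraph k V E) {u v : V} (h : G.Adj u v) : G.Adj v u := by
  obtain ⟨e, h1, h2⟩ := h; exact ⟨e, h2, h1⟩

lemma isPath_reverse (G : KHypergraph k V E) {s t : V} {l : List V}
    (h : G.IsPath s t l) : G.IsPath t s l.reverse := by
  obtain ⟨hc, hh, hl⟩ := h
  refine ⟨?_, ?_, ?_⟩
  · unfold List.Chain' at hc ⊢; rw [List.isChain_reverse]
    exact hc.imp (fun a b hab => G.adj_symm' hab)
  · rw [List.head?_reverse]; exact hl
  · rw [List.getLast?_reverse]; exact hh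

lemma isPath_append (G : KHypergraph k V E) {s m t : V} {l1 l2 : List V}
    (h1 : G.IsPath s m l1) (h2 : G.IsPath m t l2) :
    G.IsPath s t (l1 ++ l2.tail) := by
  obtain ⟨hc1, hh1, hl1⟩ := h1
  obtain ⟨hc2, hh2, hl2⟩ := h2
  have hne1 : l1 ≠ [] := by rintro rfl; simp at hh1
  cases l2 with
  | nil => simp at hh2
  | cons a t2 =>
    have ha : a = m := by simpa using hh2
    subst ha
    unfold List.Chain' at hc1 hc2; rw [List.isChain_cons] at hc2
    refine ⟨?_, ?_, ?_⟩
    · unfold List.Chain'; rw [List.isChain_append]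
      refine ⟨hc1, hc2.2, ?_⟩
      intro x hx y hy
      rw [hl1] at hx
      simp only [Option.mem_def, Option.some.injEq] at hx
      subst hx
      exact hc2.1 y hy
    · rw [List.head?_append_of_ne_nil _ hne1]; exact hh1
    · cases t2 with
      | nil =>
        simp only [List.tail_cons, List.append_nil]
        rw [hl1]
        simpa using hl2
      | cons b t3 =>
        simp only [List.tail_cons]
        rw [List.getLast?_append_of_ne_nil _ (by simp)]
        simpa using hl2

lemma exists_path_of_eqvGen (G : KHypergraph k V E) {j : Fin k} {a b : E}
    (h : Relation.EqvGen (G.GiAdj j) a b) :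
    ∀ u u', G.Mem u a → G.Mem u' b → G.part u ≠ j → G.part u' ≠ j →
      ∃ l : List V, G.IsPath u u' l ∧ ∀ w ∈ l, G.part w ≠ j := by
  induction h with
  | rel a b hab =>
    intro u u' hu hu' hju hju'
    obtain ⟨w, hwa, hwb, hwj⟩ := hab
    refine ⟨[u, w, u'], ⟨?_, rfl, rfl⟩, ?_⟩
    · exact List.isChain_cons_cons.mpr ⟨⟨a, hu, hwa⟩, List.isChain_cons_cons.mpr ⟨⟨b, hwb, hu'⟩, List.isChain_singleton _⟩⟩
    · intro x hx
      simp only [List.mem_cons, List.not_mem_nil, or_false] at hx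
      rcases hx with rfl | rfl | rfl
      · exact hju
      · exact hwj
      · exact hju'
  | refl a =>
    intro u u' hu hu' hju hju'
    refine ⟨[u, u'], ⟨?_, rfl, rfl⟩, ?_⟩
    · exact List.isChain_cons_cons.mpr ⟨⟨a, hu, hu'⟩, List.isChain_singleton _⟩
    · intro x hx
      simp only [List.mem_cons, List.not_mem_nil, or_false] at hx
      rcases hx with rfl | rfl
      · exact hju
      · exact hju'
  | symm a b hab ih =>
    intro u u' hu hu' hju hju'
    obtain ⟨l, hl, hlj⟩ := ih u' u hu' hu hju' hju
    exact ⟨l.reverse, G.isPath_reverse hl, fun w hw => hlj w (List.mem_reverse.mp hw)⟩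
  | trans a b c hab hbc ih1 ih2 =>
    intro u u' hu hu' hju hju'
    have hm : G.Mem (G.vert b (G.part u)) b := by
      show G.vert b (G.part (G.vert b (G.part u))) = _
      rw [G.hpart]
    have hmj : G.part (G.vert b (G.part u)) ≠ j := by rw [G.hpart]; exact hju
    obtain ⟨l1, hl1, hl1j⟩ := ih1 u _ hu hm hju hmj
    obtain ⟨l2, hl2, hl2j⟩ := ih2 _ u' hm hu' hmj hju'
    refine ⟨l1 ++ l2.tail, G.isPath_append hl1 hl2, ?_⟩
    intro w hw
    rcases List.mem_append.mp hw with hw | hw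
    · exact hl1j w hw
    · exact hl2j w (List.mem_of_mem_tail hw)


end KHypergraph

/-- If a (finite) `k`-partite `k`-uniform hypergraph, with hyperedges pairwise distinct
as vertex sets, is vertex-separable, then it is representable as an axis-parallel point
line cover instance in `ℝ^k`. -/
theorem stmt7 {k : ℕ} {V E : Type} [Finite V] [Finite E] (G : KHypergraph k V E)
    (hdist : Function.Injective G.vert) (hsep : G.VertexSeparable) :
    ∃ (p : E → Fin k → ℝ) (L : V → Fin k → ℝ), G.Represents p L := by
  classical
  have hfin : ∀ j : Fin k, ∃ f : Quot (G.GiAdj j) ⊕ V → ℝ, Function.Injective f := by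
    intro j
    obtain ⟨g, hg⟩ := Countable.exists_injective_nat (Quot (G.GiAdj j) ⊕ V)
    exact ⟨fun x => (g x : ℝ), fun a b h => hg (Nat.cast_injective h)⟩
  choose f hf using hfin
  set p : E → Fin k → ℝ := fun e j => f j (Sum.inl (Quot.mk _ e)) with hp
  set L : V → Fin k → ℝ := fun v j =>
    if h : ∃ e, G.Mem v e then f j (Sum.inl (Quot.mk _ h.choose))
    else f j (Sum.inr v) with hLdef
  -- connectedness from equal coordinates
  have hconn : ∀ (j : Fin k) (e e' : E),
      f j (Sum.inl (Quot.mk (G.GiAdj j) e)) = f j (Sum.inl (Quot.mk (G.GiAdj j) e')) →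
      Relation.EqvGen (G.GiAdj j) e e' := by
    intro j e e' h
    exact Quot.eq.mp (Sum.inl.inj (hf j h))
  -- no connection when separated
  have noconn : ∀ (v v' : V) (e e' : E) (j : Fin k), G.Mem v e → G.Mem v' e' →
      j ≠ G.part v → j ≠ G.part v' →
      (∀ l, G.IsPath v v' l → ∃ w ∈ l, G.part w = j) →
      f j (Sum.inl (Quot.mk (G.GiAdj j) e)) ≠ f j (Sum.inl (Quot.mk (G.GiAdj j) e')) := by
    intro v v' e e' j hve hv'e' hjv hjv' hpath heq
    obtain ⟨l, hl, hlj⟩ := G.exists_path_of_eqvGen (hconn j e e' heq) v v' hve hv'e'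
      (Ne.symm hjv) (Ne.symm hjv')
    obtain ⟨w, hwl, hwj⟩ := hpath l hl
    exact hlj w hwl hwj
  -- L agrees with p on incident edges
  have hLmem : ∀ (v : V) (e : E) (j : Fin k), G.Mem v e → j ≠ G.part v → L v j = p e j := by
    intro v e j hve hj
    have hex : ∃ e, G.Mem v e := ⟨e, hve⟩
    rw [hLdef]
    simp only [dif_pos hex]
    rw [hp]
    congr 1
    congr 1
    apply Quot.sound
    exact ⟨v, hex.choose_spec, hve, Ne.symm hj⟩
  refine ⟨p, L, ?_, ?_, ?_⟩
  · -- injectivity of p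
    intro e e' hpe
    by_contra hne
    have hne' : G.vert e ≠ G.vert e' := fun h => hne (hdist h)
    obtain ⟨i, hi⟩ := Function.ne_iff.mp hne'
    have hpart1 : G.part (G.vert e i) = i := G.hpart e i
    have hpart2 : G.part (G.vert e' i) = i := G.hpart e' i
    obtain ⟨j, hj, hpath⟩ := hsep (G.vert e i) (G.vert e' i) hi (by rw [hpart1, hpart2])
    rw [hpart1] at hj
    refine noconn (G.vert e i) (G.vert e' i) e e' j ?_ ?_ (Ne.symm ?_) (Ne.symm ?_) hpath ?_
    · show G.vert e (G.part (G.vert e i)) = G.vert e i; rw [hpart1]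
    · show G.vert e' (G.part (G.vert e' i)) = G.vert e' i; rw [hpart2]
    · rw [hpart1]; exact (Ne.symm hj)
    · rw [hpart2]; exact (Ne.symm hj)
    · exact congrFun hpe j
  · -- distinct lines
    intro v v' hne heq
    by_cases hpp : G.part v = G.part v'
    · obtain ⟨j, hj, hpath⟩ := hsep v v' hne hpp
      have hLne : L v j ≠ L v' j := by
        rw [hLdef]
        by_cases h1 : ∃ e, G.Mem v e <;> by_cases h2 : ∃ e, G.Mem v' e <;>
          simp only [dif_pos, dif_neg, h1, h2]
        · exact noconn v v' h1.choose h2.choose j h1.choose_spec h2.choose_spec hj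
            (hpp ▸ hj) hpath
        · intro h; exact (Sum.inl_ne_inr (hf j h)).elim
        · intro h; exact (Sum.inr_ne_inl (hf j h)).elim
        · intro h; exact hne (Sum.inr.inj (hf j h))
      have hmem : L v ∈ G.lineOf L v := fun j' _ => rfl
      rw [heq] at hmem
      exact hLne (hmem j (hpp ▸ hj))
    · have hx : L v ∈ G.lineOf L v := fun j' _ => rfl
      have hx' : Function.update (L v) (G.part v) (L v (G.part v) + 1) ∈ G.lineOf L v := by
        intro j' hj'
        rw [Function.update_of_ne hj']
      rw [heq] at hx hx'
      have h1 := hx (G.part v) hpp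
      have h2 := hx' (G.part v) hpp
      rw [Function.update_self] at h2
      rw [h1] at h2
      linarith
  · -- incidence
    intro v e
    constructor
    · intro hve j hj
      exact (hLmem v e j hve hj).symm
    · intro hmem
      by_contra hnm
      have hne : v ≠ G.vert e (G.part v) := fun h => hnm h.symm
      have hpp : G.part v = G.part (G.vert e (G.part v)) := (G.hpart e (G.part v)).symm
      have hv'e : G.Mem (G.vert e (G.part v)) e := by
        show G.vert e (G.part (G.vert e (G.part v))) = G.vert e (G.part v)
        rw [G.hpart]
      obtain ⟨j, hj, hpath⟩ := hsep v (G.vert e (G.part v)) hne hpp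
      have hj' : p e j = L v j := hmem j hj
      by_cases h1 : ∃ e0, G.Mem v e0
      · have hLv : L v j = f j (Sum.inl (Quot.mk (G.GiAdj j) h1.choose)) := by
          rw [hLdef]; simp only [dif_pos h1]
        rw [hLv, hp] at hj'
        exact noconn v (G.vert e (G.part v)) h1.choose e j h1.choose_spec hv'e hj
          (hpp ▸ hj) hpath hj'.symm
      · have hLv : L v j = f j (Sum.inr v) := by
          rw [hLdef]; simp only [dif_neg h1]
        rw [hLv, hp] at hj'
        exact Sum.inl_ne_inr (hf j hj')
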